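/- Let d be a positive multiple of 3, write d = 3δ. For an exponent vector i = (i_0,i_1,i_2) with i_0+i_1+i_2 = d, let g = gcd(d−3i_1, d−3i_2), a_i = (2d−3i_1−3i_2)/g, b_i = (d−3i_2)/g. Then: (1) if a_i ≥ 0 > b_i, then g·(|a_i| + |b_i|) ≤ d, and the reduced fraction −a_i/b_i = |a_i|/|b_i| has numerator-plus-denominator at most δ; (2) if b_i ≥ 0 > a_i, then the reduced fraction |a_i|/|b_i| has numerator and denominator each at most δ. -/

import Mathlib

/-- Let `d = 3δ` be a positive multiple of `3`, and `i = (i_0,i_1,i_2)` with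
`i_0+i_1+i_2 = d`.  Put `g = gcd(d−3i_1, d−3i_2)`, `a = (2d−3i_1−3i_2)/g`, `b = (d−3i_2)/g`.
Then: (1) if `a ≥ 0 > b`, then `g·(|a|+|b|) ≤ d` and `|a|+|b| ≤ δ` (the reduced fraction
`|a|/|b|` has numerator-plus-denominator at most `δ`); (2) if `b ≥ 0 > a`, then `|a| ≤ δ` and
`|b| ≤ δ`. -/
theorem stmt_18 (δ : ℕ) (hδ : 0 < δ) (d : ℕ) (hd : d = 3 * δ)
    (i0 i1 i2 : ℕ) (hi : i0 + i1 + i2 = d)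
    (g : ℕ) (hg : g = Int.gcd ((d : ℤ) - 3 * i1) ((d : ℤ) - 3 * i2))
    (a b : ℤ)
    (ha : a = (2 * (d : ℤ) - 3 * i1 - 3 * i2) / g)
    (hb : b = ((d : ℤ) - 3 * i2) / g) :
    (a ≥ 0 → b < 0 →
      (g : ℤ) * (a.natAbs + b.natAbs) ≤ d ∧ a.natAbs + b.natAbs ≤ δ) ∧
    (b ≥ 0 → a < 0 → a.natAbs ≤ δ ∧ b.natAbs ≤ δ) := by
  have hdz : (d : ℤ) = 3 * δ := by exact_mod_cast congrArg (Nat.cast : ℕ → ℤ) hd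
  have hiz : (i0 : ℤ) + i1 + i2 = d := by exact_mod_cast congrArg (Nat.cast : ℕ → ℤ) hi
  have h3u : (3 : ℤ) ∣ ((d : ℤ) - 3 * i1) := ⟨δ - i1, by linarith⟩
  have h3v : (3 : ℤ) ∣ ((d : ℤ) - 3 * i2) := ⟨δ - i2, by linarith⟩
  have h3g : (3 : ℤ) ∣ (g : ℤ) := by rw [hg]; exact Int.dvd_coe_gcd h3u h3v
  have hgu : (g : ℤ) ∣ ((d : ℤ) - 3 * i1) := by rw [hg]; exact Int.gcd_dvd_left _ _
  have hgv : (g : ℤ) ∣ ((d : ℤ) - 3 * i2) := by rw [hg]; exact Int.gcd_dvd_right _ _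
  have hguv : (g : ℤ) ∣ (2 * (d : ℤ) - 3 * i1 - 3 * i2) := by
    have := dvd_add hgu hgv
    rwa [show (d : ℤ) - 3 * i1 + ((d : ℤ) - 3 * i2) = 2 * (d : ℤ) - 3 * i1 - 3 * i2 by ring] at this
  have hga : (g : ℤ) * a = 2 * (d : ℤ) - 3 * i1 - 3 * i2 := by
    rw [ha]; exact Int.mul_ediv_cancel' hguv
  have hgb : (g : ℤ) * b = (d : ℤ) - 3 * i2 := by
    rw [hb]; exact Int.mul_ediv_cancel' hgv
  obtain ⟨k, hk⟩ := h3g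
  constructor
  · intro hA hB
    have hgne : g ≠ 0 := by
      intro h0
      rw [h0] at hb
      simp at hb
      omega
    clear ha hb hg
    have hg3 : (3 : ℤ) ≤ (g : ℤ) := by
      have : (0:ℤ) < g := by exact_mod_cast Nat.pos_of_ne_zero hgne
      omega
    have e1 : (g : ℤ) * (a - b) = (d : ℤ) - 3 * i1 := by
      rw [mul_sub, hga, hgb]; ring
    have h1 : ((a.natAbs : ℤ)) = a := Int.natAbs_of_nonneg hA
    have h2 : ((b.natAbs : ℤ)) = -b := by
      rw [Int.ofNat_natAbs_of_nonpos (le_of_lt hB)]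
    have hi1 : (0:ℤ) ≤ 3 * i1 := by positivity
    constructor
    · rw [h1, h2]
      have e1' : (g : ℤ) * (a + -b) = (d : ℤ) - 3 * i1 := by rw [← e1]; ring
      linarith
    · have hab : 0 < a - b := by linarith
      have h3ab : 3 * (a - b) ≤ (g : ℤ) * (a - b) :=
        mul_le_mul_of_nonneg_right hg3 (le_of_lt hab)
      have : a - b ≤ (δ : ℤ) := by
        rw [e1] at h3ab; linarith
      omega
  · intro hB hA
    have hgne : g ≠ 0 := by
      intro h0
      rw [h0] at ha
      simp at ha
      omega
    clear ha hb hg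
    have hg3 : (3 : ℤ) ≤ (g : ℤ) := by
      have : (0:ℤ) < g := by exact_mod_cast Nat.pos_of_ne_zero hgne
      omega
    have e2 : (g : ℤ) * (-a) = (d : ℤ) - 3 * i0 := by
      rw [mul_neg, hga]; linarith
    have h3a : 3 * (-a) ≤ (g : ℤ) * (-a) :=
      mul_le_mul_of_nonneg_right hg3 (by linarith)
    have h3b : 3 * b ≤ (g : ℤ) * b :=
      mul_le_mul_of_nonneg_right hg3 hB
    have hi0 : (0:ℤ) ≤ 3 * i0 := by positivity
    have hi2 : (0:ℤ) ≤ 3 * i2 := by positivity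
    have ha' : -a ≤ (δ : ℤ) := by rw [e2] at h3a; linarith
    have hb' : b ≤ (δ : ℤ) := by rw [hgb] at h3b; linarith
    constructor <;> omega
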